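/- For all positive integers 1 ≤ i < j, define h(i,j) := Σ_{k=1}^{j-i} P(η₁+⋯+η_k = j-i) where η₁, η₂, ... are i.i.d. with P(η₁ = n) = 1/(n(n+1)) for n ≥ 1. Then for |z| < 1 and fixed i, Σ_{j=i}^∞ h(i,j) z^{j-1} = z^i / ((1-z)(-log(1-z))), where h(i,i) := 1. -/

import Mathlib

/-- Distribution of `η₁`: `P(η₁ = n) = 1/(n(n+1))` for `n ≥ 1`, and `0` for `n = 0`. -/
noncomputable def etaDist (n : ℕ) : ℝ :=
  if n = 0 then 0 else 1 / ((n : ℝ) * (n + 1))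

/-- `convPow k m = P(η₁ + ⋯ + η_k = m)` for i.i.d. `η`'s with distribution `etaDist`. -/
noncomputable def convPow : ℕ → ℕ → ℝ
  | 0, m => if m = 0 then 1 else 0
  | k + 1, m => ∑ n ∈ Finset.Icc 1 m, etaDist n * convPow k (m - n)

/-- The hitting probabilities `h(i,j) = Σ_{k=1}^{j-i} P(η₁+⋯+η_k = j-i)`, with `h(i,i) = 1`. -/
noncomputable def hittingProb (i j : ℕ) : ℝ :=
  if j = i then 1 else ∑ k ∈ Finset.Icc 1 (j - i), convPow k (j - i)

lemma etaDist_nonneg (n : ℕ) : 0 ≤ etaDist n := by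
  unfold etaDist
  split
  · exact le_refl 0
  · positivity

lemma convPow_nonneg (k m : ℕ) : 0 ≤ convPow k m := by
  induction k generalizing m with
  | zero => unfold convPow; split <;> norm_num
  | succ k ih =>
    unfold convPow
    exact Finset.sum_nonneg fun n _ => mul_nonneg (etaDist_nonneg n) (ih _)

lemma convPow_eq_zero {k m : ℕ} (h : m < k) : convPow k m = 0 := by
  induction k generalizing m with
  | zero => omega
  | succ k ih =>
    unfold convPow
    refine Finset.sum_eq_zero fun n hn => ?_
    rw [Finset.mem_Icc] at hn
    rw [ih (by omega), mul_zero]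

lemma convPow_succ_conv (k m : ℕ) (z : ℝ) :
    convPow (k + 1) m * z ^ m =
      ∑ n ∈ Finset.range (m + 1), (etaDist n * z ^ n) * (convPow k (m - n) * z ^ (m - n)) := by
  show (∑ n ∈ Finset.Icc 1 m, etaDist n * convPow k (m - n)) * z ^ m = _
  rw [Finset.sum_mul]
  rw [← Finset.sum_subset
    (show Finset.Icc 1 m ⊆ Finset.range (m + 1) by
      intro x hx
      rw [Finset.mem_Icc] at hx
      rw [Finset.mem_range]
      omega)
    (fun x hx hx' => by
      have hx0 : x = 0 := by
        rw [Finset.mem_range] at hx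
        rw [Finset.mem_Icc] at hx'
        omega
      simp [hx0, etaDist])]
  refine Finset.sum_congr rfl fun n hn => ?_
  rw [Finset.mem_Icc] at hn
  have hzz : z ^ n * z ^ (m - n) = z ^ m := by
    rw [← pow_add]; congr 1; omega
  calc etaDist n * convPow k (m - n) * z ^ m
      = etaDist n * convPow k (m - n) * (z ^ n * z ^ (m - n)) := by rw [hzz]
    _ = etaDist n * z ^ n * (convPow k (m - n) * z ^ (m - n)) := by ring

theorem hittingProb_generating_function (i : ℕ) (hi : 1 ≤ i) (z : ℝ) (hz : z ∈ Set.Ioo (0:ℝ) 1) :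
    ∑' m : ℕ, hittingProb i (i + m) * z ^ (i + m - 1) =
      z ^ i / ((1 - z) * (-Real.log (1 - z))) := by
  obtain ⟨hz0, hz1⟩ := hz
  have hzne : z ≠ 0 := ne_of_gt hz0
  set L : ℝ := -Real.log (1 - z) with hLdef
  have hLpos : 0 < L := by
    have : Real.log (1 - z) < 0 := Real.log_neg (by linarith) (by linarith)
    rw [hLdef]; linarith
  -- the base power series
  have h1 : HasSum (fun n : ℕ => z ^ (n + 1) / ((n : ℝ) + 1)) L :=
    Real.hasSum_pow_div_log_of_abs_lt_one (by rw [abs_of_pos hz0]; exact hz1)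
  have h2 : HasSum (fun n : ℕ => z ^ (n + 1 + 1) / ((n : ℝ) + 1 + 1)) (L - z) := by
    have := (hasSum_nat_add_iff (f := fun n : ℕ => z ^ (n + 1) / ((n : ℝ) + 1)) 1
      (g := L - z)).2 (by
        convert h1 using 1
        · rfl
        · simp)
    convert this using 2 with n
    · rfl
    · push_cast
      ring_nf
  have h3 : HasSum (fun n : ℕ => etaDist (n + 1) * z ^ (n + 1)) (L - (L - z) / z) := by
    have h2' := h2.mul_left (1 / z)
    have h4 := h1.sub h2'
    have hval : L - 1 / z * (L - z) = L - (L - z) / z := by ring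
    rw [hval] at h4
    have hfun : (fun n : ℕ => z ^ (n + 1) / ((n : ℝ) + 1) -
        1 / z * (z ^ (n + 1 + 1) / ((n : ℝ) + 1 + 1))) =
        fun n : ℕ => etaDist (n + 1) * z ^ (n + 1) := by
      funext n
      have hne1 : ((n : ℝ) + 1) ≠ 0 := by positivity
      have hne2 : ((n : ℝ) + 1 + 1) ≠ 0 := by positivity
      simp only [etaDist, Nat.succ_ne_zero, if_false]
      push_cast
      field_simp
      ring
    rwa [hfun] at h4
  have hF : HasSum (fun n : ℕ => etaDist n * z ^ n) (L - (L - z) / z) := by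
    refine (hasSum_nat_add_iff' (f := fun n : ℕ => etaDist n * z ^ n) 1).1 ?_
    have : ∑ i ∈ Finset.range 1, etaDist i * z ^ i = 0 := by simp [etaDist]
    rw [this, sub_zero]
    exact h3
  set F : ℝ := L - (L - z) / z with hFdef
  have hFnonneg : 0 ≤ F := hF.nonneg fun n => mul_nonneg (etaDist_nonneg n) (by positivity)
  have h1F : 1 - F = (1 - z) * L / z := by
    rw [hFdef]; field_simp; ring
  have hFlt : F < 1 := by
    have h' : 0 < (1 - z) * L / z := div_pos (mul_pos (by linarith) hLpos) hz0
    linarith [h1F ▸ h']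
  -- summability facts
  have hFsummable : Summable (fun n : ℕ => etaDist n * z ^ n) := hF.summable
  have hFtsum : ∑' n, etaDist n * z ^ n = F := hF.tsum_eq
  have hEnorm : Summable (fun n : ℕ => ‖etaDist n * z ^ n‖) := by
    refine hFsummable.congr fun n => ?_
    rw [Real.norm_eq_abs, abs_of_nonneg (mul_nonneg (etaDist_nonneg n) (by positivity))]
  -- key: HasSum (fun m => convPow k m * z^m) (F^k)
  have key : ∀ k : ℕ, HasSum (fun m : ℕ => convPow k m * z ^ m) (F ^ k) := by
    intro k
    induction k with
    | zero =>
      have heq : (fun m : ℕ => convPow 0 m * z ^ m) = fun m => if m = 0 then (1:ℝ) else 0 := by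
        funext m
        show (if m = 0 then (1:ℝ) else 0) * z ^ m = _
        split <;> simp_all
      rw [heq, pow_zero]
      exact hasSum_ite_eq 0 1
    | succ k ih =>
      have ihnorm : Summable (fun m : ℕ => ‖convPow k m * z ^ m‖) := by
        refine ih.summable.congr fun m => ?_
        rw [Real.norm_eq_abs, abs_of_nonneg (mul_nonneg (convPow_nonneg k m) (by positivity))]
      have hprod := hasSum_sum_range_mul_of_summable_norm hEnorm ihnorm
      rw [hFtsum, ih.tsum_eq] at hprod
      have heq : (fun m : ℕ => convPow (k + 1) m * z ^ m) =
          fun m => ∑ n ∈ Finset.range (m + 1),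
            (etaDist n * z ^ n) * (convPow k (m - n) * z ^ (m - n)) := by
        funext m; exact convPow_succ_conv k m z
      rw [heq, pow_succ']
      exact hprod
  -- double sum over (k, m)
  have hsummable2 : Summable (fun p : ℕ × ℕ => convPow p.1 p.2 * z ^ p.2) := by
    refine (summable_prod_of_nonneg ?_).2 ⟨fun k => (key k).summable, ?_⟩
    · intro p; exact mul_nonneg (convPow_nonneg _ _) (by positivity)
    · refine (summable_geometric_of_lt_one hFnonneg hFlt).congr fun k => ?_
      rw [(key k).tsum_eq]
  have hfiber : ∀ m : ℕ, Summable (fun k : ℕ => convPow k m * z ^ m) := by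
    intro m
    refine summable_of_ne_finset_zero (s := Finset.range (m + 1)) fun k hk => ?_
    rw [Finset.mem_range] at hk
    rw [convPow_eq_zero (by omega), zero_mul]
  have hswap : ∑' m, ∑' k, convPow k m * z ^ m = ∑' k, ∑' m, convPow k m * z ^ m :=
    Summable.tsum_comm' hsummable2 (fun k => (key k).summable) hfiber
  have hgeom : ∑' k : ℕ, ∑' m : ℕ, convPow k m * z ^ m = (1 - F)⁻¹ := by
    rw [show (fun k : ℕ => ∑' m : ℕ, convPow k m * z ^ m) = fun k => F ^ k from
      funext fun k => (key k).tsum_eq]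
    exact tsum_geometric_of_lt_one hFnonneg hFlt
  -- identify inner sums with hittingProb
  have hterm : ∀ m : ℕ, hittingProb i (i + m) * z ^ (i + m - 1) =
      (∑' k : ℕ, convPow k m * z ^ m) * z ^ (i - 1) := by
    intro m
    have htsum_fin : ∑' k : ℕ, convPow k m * z ^ m =
        ∑ k ∈ Finset.range (m + 1), convPow k m * z ^ m := by
      refine tsum_eq_sum fun k hk => ?_
      rw [Finset.mem_range] at hk
      rw [convPow_eq_zero (by omega), zero_mul]
    have hpow : z ^ (i + m - 1) = z ^ m * z ^ (i - 1) := by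
      rw [← pow_add]; congr 1; omega
    rcases Nat.eq_zero_or_pos m with rfl | hm
    · simp only [hittingProb, add_zero, if_pos rfl, htsum_fin]
      norm_num [convPow]
    · have hji : i + m ≠ i := by omega
      have hsub : i + m - i = m := by omega
      rw [hittingProb, if_neg hji, hsub, htsum_fin, hpow]
      rw [show Finset.range (m + 1) = insert 0 (Finset.Icc 1 m) by
        ext x; simp [Finset.mem_range, Finset.mem_Icc, Nat.lt_succ_iff]; omega]
      rw [Finset.sum_insert (by simp)]
      have h0 : convPow 0 m * z ^ m = 0 := by
        show (if m = 0 then (1:ℝ) else 0) * z ^ m = 0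
        rw [if_neg (by omega), zero_mul]
      rw [h0, zero_add, ← Finset.sum_mul]
      ring
  -- assemble
  calc ∑' m : ℕ, hittingProb i (i + m) * z ^ (i + m - 1)
      = ∑' m : ℕ, (∑' k : ℕ, convPow k m * z ^ m) * z ^ (i - 1) := by
        exact tsum_congr hterm
    _ = (∑' m : ℕ, ∑' k : ℕ, convPow k m * z ^ m) * z ^ (i - 1) := tsum_mul_right
    _ = (1 - F)⁻¹ * z ^ (i - 1) := by rw [hswap, hgeom]
    _ = z ^ i / ((1 - z) * L) := by
        rw [h1F]
        rw [show z ^ i = z * z ^ (i - 1) by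
          rw [← pow_succ']; congr 1; omega]
        field_simp
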